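/- arXiv:1604.05655 — 3 statements merged into one kernel-verified Lean document; each statement's English description precedes it below -/
import Mathlib

section
/- Let S be a finite nonempty type with d = |S| elements, let N be an index type with a bijection b : N → S×S, and write b(n) = (j_n, j'_n). Let A_n = |j_n⟩⟨j'_n| (the matrix with a single 1 entry at position (j_n, j'_n)), let χ : N × N → ℂ, and define the map ℰ(ρ) = Σ_{m,n} χ_{mn} A_m ρ A_n† on S×S matrices. Define the Jamiolkowski state ρ_ℰ = (1/d) Σ_{j,k∈S} (|j⟩⟨k|) ⊗ ℰ(|j⟩⟨k|), a matrix indexed by (S×S)×(S×S). Then for all m, n ∈ N: the entry of ρ_ℰ at row index (j'_m, j_m) and column index (j'_n, j_n) equals χ_{mn}/d. (Thus every element of the process matrix χ is mapped to a unique element of ρ_ℰ.) -/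
open Complex Matrix Kronecker

private lemma entry_aux {S : Type*} [Fintype S] [DecidableEq S]
    (a c e f i j : S) (ρ : Matrix S S ℂ) :
    (Matrix.single a c (1:ℂ) * ρ * (Matrix.single e f (1:ℂ))ᴴ) i j
      = if a = i ∧ e = j then ρ c f else 0 := by
  split_ifs with h
  · obtain ⟨rfl, rfl⟩ := h
    simp [Matrix.mul_apply, Matrix.conjTranspose_apply, Matrix.single, ite_and,
      Finset.sum_ite_eq, Finset.sum_ite_eq']
  · rw [not_and_or] at h
    rcases h with h | h
    · rw [Matrix.mul_apply]
      apply Finset.sum_eq_zero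
      intro x _
      simp [Matrix.mul_apply, Matrix.single, Ne.symm h, h]
    · rw [Matrix.mul_apply]
      apply Finset.sum_eq_zero
      intro x _
      simp [Matrix.conjTranspose_apply, Matrix.single, Ne.symm h, h]


/-- the Jamiolkowski isomorphism. If the operator basis consists of the
matrix units `A_n = |j_n⟩⟨j'_n|` indexed by a bijection `n ↦ (j_n, j'_n)`, then each
entry of the process matrix `χ` appears (divided by `d`) as a unique entry of the
Jamiolkowski state `ρ_ℰ = (1/d) Σ_{j,k} |j⟩⟨k| ⊗ ℰ(|j⟩⟨k|)`. -/
theorem jamiolkowski_process_matrix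
    (S : Type*) [Fintype S] [Nonempty S] [DecidableEq S]
    (d : ℕ) (hd : d = Fintype.card S)
    (N : Type*) [Fintype N] (b : N ≃ S × S)
    (A : N → Matrix S S ℂ)
    (hA : ∀ n : N, A n = Matrix.single (b n).1 (b n).2 1)
    (χ : N × N → ℂ)
    (ℰ : Matrix S S ℂ → Matrix S S ℂ)
    (hℰ : ∀ ρ, ℰ ρ = ∑ m : N, ∑ n : N, χ (m, n) • (A m * ρ * (A n)ᴴ))
    (ρℰ : Matrix ((S × S)) ((S × S)) ℂ)
    (hρℰ : ρℰ = (1 / (d : ℂ)) •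
      ∑ j : S, ∑ k : S,
        (Matrix.single j k (1 : ℂ)) ⊗ₖ ℰ (Matrix.single j k 1)) :
    ∀ m n : N, ρℰ ((b m).2, (b m).1) ((b n).2, (b n).1) = χ (m, n) / d := by
  intro m n
  have hstd : ∀ (j k i l : S), Matrix.single j k (1:ℂ) i l
      = if j = i ∧ k = l then 1 else 0 := by
    intros j k i l; simp [Matrix.single, ite_and]
  have hE : ∀ j k : S, ℰ (Matrix.single j k 1) ((b m).1) ((b n).1)
      = ∑ p : N, ∑ q : N, χ (p, q) *
        (if ((b p).1 = (b m).1 ∧ (b q).1 = (b n).1) then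
          (if j = (b p).2 ∧ k = (b q).2 then (1:ℂ) else 0) else 0) := by
    intro j k
    simp only [hℰ, hA, Matrix.sum_apply, Matrix.smul_apply, smul_eq_mul, entry_aux, hstd]
  rw [hρℰ]
  simp only [Matrix.smul_apply, Matrix.sum_apply, Matrix.kroneckerMap_apply, smul_eq_mul,
    hstd, hE]
  simp only [ite_and, ite_mul, zero_mul, one_mul]
  rw [Fintype.sum_eq_single ((b m).2) (fun x hx => by
    simp [hx]), Fintype.sum_eq_single ((b n).2) (fun x hx => by
    simp [hx]), if_pos rfl, if_pos rfl]
  rw [Finset.sum_eq_single m]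
  · rw [Finset.sum_eq_single n]
    · simp [div_eq_mul_inv, mul_comm]
    · intro q _ hq
      have : ¬ ((b q).1 = (b n).1 ∧ (b n).2 = (b q).2) := by
        rintro ⟨h1, h2⟩
        exact hq (b.injective (Prod.ext h1 h2.symm))
      rcases not_and_or.mp this with h | h <;> simp [h]
    · simp
  · intro p _ hp
    have hps : ¬ ((b p).1 = (b m).1 ∧ (b m).2 = (b p).2) := by
      rintro ⟨h1, h2⟩
      exact hp (b.injective (Prod.ext h1 h2.symm))
    apply Finset.sum_eq_zero
    intro q _
    rcases not_and_or.mp hps with h | h <;> simp [h]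
  · simp
end

section
/- Let Q = (1/√2)·[[1,0,0,i],[0,i,1,0],[0,i,−1,0],[1,0,0,−i]] (the Bell/magic basis change matrix). For any u₁, u₂ ∈ SU(2) (2×2 complex unitary matrices with determinant 1), the 4×4 matrix Q† (u₁ ⊗ u₂) Q has all real entries and is orthogonal (its transpose times itself is the identity). That is, local single-qubit operations correspond to real orthogonal matrices in the Bell basis. -/
open Complex Matrix Kronecker

noncomputable def Q : Matrix (Fin 4) (Fin 4) ℂ :=
  (1 / (Real.sqrt 2 : ℂ)) •
    !![1, 0, 0, Complex.I;
       0, Complex.I, 1, 0;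
       0, Complex.I, -1, 0;
       1, 0, 0, -Complex.I]

noncomputable def kron2 (A B : Matrix (Fin 2) (Fin 2) ℂ) : Matrix (Fin 4) (Fin 4) ℂ :=
  Matrix.reindex finProdFinEquiv finProdFinEquiv (A ⊗ₖ B)

lemma kron2_eq (A B : Matrix (Fin 2) (Fin 2) ℂ) :
    kron2 A B = !![A 0 0 * B 0 0, A 0 0 * B 0 1, A 0 1 * B 0 0, A 0 1 * B 0 1;
                   A 0 0 * B 1 0, A 0 0 * B 1 1, A 0 1 * B 1 0, A 0 1 * B 1 1;
                   A 1 0 * B 0 0, A 1 0 * B 0 1, A 1 1 * B 0 0, A 1 1 * B 0 1;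
                   A 1 0 * B 1 0, A 1 0 * B 1 1, A 1 1 * B 1 0, A 1 1 * B 1 1] := by
  ext i j
  fin_cases i <;> fin_cases j <;> rfl

lemma kron2_mul (A B C D : Matrix (Fin 2) (Fin 2) ℂ) :
    kron2 A B * kron2 C D = kron2 (A * C) (B * D) := by
  simp only [kron2, Matrix.reindex_apply, Matrix.submatrix_mul_equiv,
    Matrix.mul_kronecker_mul]

lemma kron2_conjTranspose (A B : Matrix (Fin 2) (Fin 2) ℂ) :
    (kron2 A B)ᴴ = kron2 Aᴴ Bᴴ := by
  have h : (A ⊗ₖ B)ᴴ = Aᴴ ⊗ₖ Bᴴ := by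
    ext ⟨i, i'⟩ ⟨j, j'⟩
    simp [Matrix.conjTranspose_apply, Matrix.kroneckerMap_apply]
  simp [kron2, Matrix.reindex_apply, Matrix.conjTranspose_submatrix, h]

lemma kron2_one : kron2 1 1 = 1 := by
  simp [kron2, Matrix.one_kronecker_one, Matrix.reindex_apply, Matrix.submatrix_one_equiv]

lemma kron2_map_conj (A B : Matrix (Fin 2) (Fin 2) ℂ) :
    (kron2 A B).map (starRingEnd ℂ) =
      kron2 (A.map (starRingEnd ℂ)) (B.map (starRingEnd ℂ)) := by
  rw [kron2_eq, kron2_eq]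
  ext i j
  fin_cases i <;> fin_cases j <;> simp

/-- The Pauli Y matrix. -/
noncomputable def sy : Matrix (Fin 2) (Fin 2) ℂ := !![0, -Complex.I; Complex.I, 0]

noncomputable def S : Matrix (Fin 4) (Fin 4) ℂ := kron2 sy sy

lemma sy_mul_sy : sy * sy = 1 := by
  ext i j
  fin_cases i <;> fin_cases j <;>
    simp [sy, Matrix.mul_apply, Fin.sum_univ_two, Matrix.one_apply]

lemma sy_herm : syᴴ = sy := by
  ext i j
  fin_cases i <;> fin_cases j <;> simp [sy, Matrix.conjTranspose_apply]

lemma S_mul_S : S * S = 1 := by rw [S, kron2_mul, sy_mul_sy, kron2_one]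

lemma S_herm : Sᴴ = S := by rw [S, kron2_conjTranspose, sy_herm]

lemma sqrt2_mul_self : ((Real.sqrt 2 : ℝ) : ℂ) * ((Real.sqrt 2 : ℝ) : ℂ) = 2 := by
  norm_cast
  exact Real.mul_self_sqrt (by norm_num)

lemma sqrt2_sq : ((Real.sqrt 2 : ℝ) : ℂ) ^ 2 = 2 := by
  rw [sq, sqrt2_mul_self]

lemma Q_unitary : Qᴴ * Q = 1 := by
  ext i j
  fin_cases i <;> fin_cases j <;>
    simp [Q, Matrix.mul_apply, Fin.sum_univ_four, Matrix.conjTranspose_apply,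
      Complex.conj_ofReal, Matrix.one_apply] <;>
    field_simp <;>
    simp [sqrt2_mul_self, sqrt2_sq] <;> ring

lemma Q_unitary' : Q * Qᴴ = 1 := by
  ext i j
  fin_cases i <;> fin_cases j <;>
    simp [Q, Matrix.mul_apply, Fin.sum_univ_four, Matrix.conjTranspose_apply,
      Complex.conj_ofReal, Matrix.one_apply] <;>
    field_simp <;>
    simp [sqrt2_mul_self, sqrt2_sq] <;> ring

lemma Q_conj : Q.map (starRingEnd ℂ) = -(S * Q) := by
  have hS : S = !![0,0,0,-1; 0,0,1,0; 0,1,0,0; -1,0,0,0] := by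
    rw [S, kron2_eq]
    norm_num [sy]
  rw [hS]
  ext i j
  fin_cases i <;> fin_cases j <;>
    simp [Q, Matrix.mul_apply, Fin.sum_univ_four, Matrix.map_apply,
      Complex.conj_ofReal] <;> ring

lemma Qt : Qᵀ = -(Qᴴ * S) := by
  have h : Qᵀ = (Q.map (starRingEnd ℂ))ᴴ := by
    ext i j
    simp [Matrix.conjTranspose_apply, Matrix.map_apply, Matrix.transpose_apply]
  rw [h, Q_conj, Matrix.conjTranspose_neg, Matrix.conjTranspose_mul, S_herm]

lemma Qh_conj : (Qᴴ).map (starRingEnd ℂ) = -(Qᴴ * S) := by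
  have h : (Qᴴ).map (starRingEnd ℂ) = Qᵀ := by
    ext i j
    simp [Matrix.conjTranspose_apply, Matrix.map_apply, Matrix.transpose_apply]
  rw [h, Qt]

lemma su2_conj {u : Matrix (Fin 2) (Fin 2) ℂ}
    (hu : u ∈ Matrix.unitaryGroup (Fin 2) ℂ) (hdu : u.det = 1) :
    u.map (starRingEnd ℂ) = sy * u * sy := by
  have h1 : u * u.adjugate = 1 := by rw [Matrix.mul_adjugate, hdu, one_smul]
  have h2 : uᴴ * u = 1 := Matrix.mem_unitaryGroup_iff'.mp hu
  have hadj : uᴴ = u.adjugate := by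
    calc uᴴ = uᴴ * (u * u.adjugate) := by rw [h1, mul_one]
    _ = (uᴴ * u) * u.adjugate := by rw [mul_assoc]
    _ = u.adjugate := by rw [h2, one_mul]
  rw [Matrix.adjugate_fin_two] at hadj
  have ha : (starRingEnd ℂ) (u 0 1) = -(u 1 0) := by
    have := congrFun (congrFun hadj 1) 0
    simpa [Matrix.conjTranspose_apply] using this
  have hb : (starRingEnd ℂ) (u 0 0) = u 1 1 := by
    have := congrFun (congrFun hadj 0) 0
    simpa [Matrix.conjTranspose_apply] using this
  have ha' : (starRingEnd ℂ) (u 1 0) = -(u 0 1) := by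
    have := congrFun (congrFun hadj 0) 1
    simpa [Matrix.conjTranspose_apply] using this
  have hb' : (starRingEnd ℂ) (u 1 1) = u 0 0 := by
    have := congrFun (congrFun hadj 1) 1
    simpa [Matrix.conjTranspose_apply] using this
  ext i j
  fin_cases i <;> fin_cases j <;>
    simp [sy, Matrix.mul_apply, Matrix.vecMul, dotProduct, Fin.sum_univ_two,
      Matrix.map_apply, ha, hb, ha', hb'] <;>
    ring_nf <;>
    simp [Complex.I_sq]

/-- local single-qubit operations (elements of `SU(2) ⊗ SU(2)`) correspond
to real orthogonal matrices in the Bell basis. -/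
theorem local_gates_real_orthogonal_in_bell_basis
    (u₁ u₂ : Matrix (Fin 2) (Fin 2) ℂ)
    (hu₁ : u₁ ∈ Matrix.unitaryGroup (Fin 2) ℂ) (hdu₁ : u₁.det = 1)
    (hu₂ : u₂ ∈ Matrix.unitaryGroup (Fin 2) ℂ) (hdu₂ : u₂.det = 1)
    (M : Matrix (Fin 4) (Fin 4) ℂ) (hM : M = Qᴴ * kron2 u₁ u₂ * Q) :
    (∀ i j, (M i j).im = 0) ∧ Mᵀ * M = 1 := by
  set K := kron2 u₁ u₂ with hK
  have hKc : K.map (starRingEnd ℂ) = S * K * S := by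
    rw [hK, kron2_map_conj, su2_conj hu₁ hdu₁, su2_conj hu₂ hdu₂, S, kron2_mul, kron2_mul]
  have hMc : M.map (starRingEnd ℂ) = M := by
    rw [hM, Matrix.map_mul, Matrix.map_mul, Qh_conj, hKc, Q_conj]
    calc -(Qᴴ * S) * (S * K * S) * -(S * Q)
        = Qᴴ * (S * S) * K * (S * S) * Q := by
          simp only [Matrix.neg_mul, Matrix.mul_neg, neg_neg, Matrix.mul_assoc]
      _ = Qᴴ * K * Q := by rw [S_mul_S]; simp [Matrix.mul_assoc]
  have key : ∀ i j, (starRingEnd ℂ) (M i j) = M i j := fun i j =>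
    congrFun (congrFun hMc i) j
  have him : ∀ i j, (M i j).im = 0 := fun i j => Complex.conj_eq_iff_im.mp (key i j)
  refine ⟨him, ?_⟩
  have hT : Mᵀ = Mᴴ := by
    ext i j
    simp only [Matrix.conjTranspose_apply, Matrix.transpose_apply]
    exact (key j i).symm
  rw [hT, hM]
  have hKu : Kᴴ * K = 1 := by
    have h₁ : u₁ᴴ * u₁ = 1 := Matrix.mem_unitaryGroup_iff'.mp hu₁
    have h₂ : u₂ᴴ * u₂ = 1 := Matrix.mem_unitaryGroup_iff'.mp hu₂
    rw [hK, kron2_conjTranspose, kron2_mul, h₁, h₂, kron2_one]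
  calc (Qᴴ * K * Q)ᴴ * (Qᴴ * K * Q)
      = Qᴴ * (Kᴴ * ((Q * Qᴴ) * (K * Q))) := by
        simp only [Matrix.conjTranspose_mul, Matrix.conjTranspose_conjTranspose,
          Matrix.mul_assoc]
    _ = 1 := by
        rw [Q_unitary', Matrix.one_mul, ← Matrix.mul_assoc Kᴴ K Q, hKu, Matrix.one_mul,
          Q_unitary]
end

section
/- Let n ≥ 1, ħ > 0, and let H : ℝ → (n×n Hermitian complex matrices), E₀ : ℝ → ℝ, v : ℝ → ℂⁿ and φ : ℝ → ℝ be functions such that v and φ are differentiable, ‖v(t)‖ = 1 for all t, H(t) v(t) = E₀(t) v(t) for all t, and the curve ψ(t) = e^{iφ(t)} v(t) satisfies the Schrödinger equation iħ ψ'(t) = H(t) ψ(t). Then for all t: φ'(t) = i⟨v(t), v'(t)⟩ − E₀(t)/ħ (as complex numbers; note i⟨v(t), v'(t)⟩ is real since ‖v(t)‖ is constant). Equivalently, the total phase splits into the Berry (geometric) phase with derivative i⟨v, v'⟩ and the dynamical phase with derivative −E₀/ħ. -/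
open Complex

/-- splitting of the phase of an adiabatic eigenstate into the Berry
(geometric) phase and the dynamical phase. If `ψ(t) = e^{iφ(t)} v(t)` solves the
Schrödinger equation `ihbarψ' = H(t)ψ` with `v(t)` a unit eigenvector of the Hermitian
matrix `H(t)` with eigenvalue `E₀(t)`, then `φ'(t) = i⟨v(t), v'(t)⟩ − E₀(t)/hbar`. -/
theorem berry_phase_decomposition
    (n : ℕ) (hn : 1 ≤ n) (hbar : ℝ) (hb : 0 < hbar)
    (H : ℝ → Matrix (Fin n) (Fin n) ℂ) (hHerm : ∀ t, (H t).IsHermitian)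
    (E₀ : ℝ → ℝ) (v : ℝ → EuclideanSpace ℂ (Fin n)) (φ : ℝ → ℝ)
    (hv : Differentiable ℝ v) (hφ : Differentiable ℝ φ)
    (hnorm : ∀ t, ‖v t‖ = 1)
    (heig : ∀ t, Matrix.toEuclideanLin (H t) (v t) = (E₀ t : ℂ) • v t)
    (hSE : ∀ t, (Complex.I * (hbar : ℂ)) •
        deriv (fun s => Complex.exp (Complex.I * (φ s : ℂ)) • v s) t =
      Matrix.toEuclideanLin (H t) (Complex.exp (Complex.I * (φ t : ℂ)) • v t)) :
    ∀ t, ((deriv φ t : ℝ) : ℂ) =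
      Complex.I * (inner ℂ (v t) (deriv v t) : ℂ) - ((E₀ t / hbar : ℝ) : ℂ) := by
  intro t
  set c := Complex.exp (Complex.I * (φ t : ℂ)) with hc
  have hc0 : c ≠ 0 := Complex.exp_ne_zero _
  have hb0 : (hbar : ℂ) ≠ 0 := by exact_mod_cast hb.ne'
  have hφR : HasDerivAt (fun s => ((φ s : ℝ) : ℂ)) ((deriv φ t : ℝ) : ℂ) t :=
    (hφ t).hasDerivAt.ofReal_comp
  have hφC : HasDerivAt (fun s => Complex.I * (φ s : ℂ))
      (Complex.I * ((deriv φ t : ℝ) : ℂ)) t := hφR.const_mul Complex.I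
  have hexp : HasDerivAt (fun s => Complex.exp (Complex.I * (φ s : ℂ)))
      (c * (Complex.I * ((deriv φ t : ℝ) : ℂ))) t := hφC.cexp
  have hψ : HasDerivAt (fun s => Complex.exp (Complex.I * (φ s : ℂ)) • v s)
      (c • deriv v t + (c * (Complex.I * ((deriv φ t : ℝ) : ℂ))) • v t) t :=
    hexp.smul (hv t).hasDerivAt
  have key : (Complex.I * (hbar : ℂ)) •
      (c • deriv v t + (c * (Complex.I * ((deriv φ t : ℝ) : ℂ))) • v t) =
      c • ((E₀ t : ℂ) • v t) := by
    have h := hSE t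
    rw [hψ.deriv] at h
    rw [h, map_smul, heig t]
  have hinner := congrArg (fun w => (inner ℂ (v t) w : ℂ)) key
  simp only [inner_add_right, inner_smul_right] at hinner
  have h1 : (inner ℂ (v t) (v t) : ℂ) = 1 := by
    rw [inner_self_eq_norm_sq_to_K, hnorm t]
    norm_num
  rw [h1] at hinner
  set a : ℂ := inner ℂ (v t) (deriv v t) with ha
  set p : ℂ := ((deriv φ t : ℝ) : ℂ) with hp
  have h2 : c * (Complex.I * (hbar : ℂ) * (Complex.I * p + a)) = c * (E₀ t : ℂ) := by
    linear_combination hinner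
  have h3 : Complex.I * (hbar : ℂ) * (Complex.I * p + a) = (E₀ t : ℂ) :=
    mul_left_cancel₀ hc0 h2
  have hE : ((E₀ t / hbar : ℝ) : ℂ) = (E₀ t : ℂ) / (hbar : ℂ) := by push_cast; ring
  rw [hE]
  field_simp
  linear_combination -h3 + p * (hbar : ℂ) * Complex.I_sq
end
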